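/- For every pair (p,q) in the image of φ on the join-irreducible elements P of Γ(X;γ), and every (p',q') with p' ≤ p and q' ≤ q, there exists a join-irreducible element c' of Γ(X;γ) with φ(c') = (p',q'). -/
import Mathlib


def IsTup (n m : ℕ) (c : Fin m → ℕ) : Prop :=
  StrictMono c ∧ ∀ i, 1 ≤ c i ∧ c i ≤ n

def Gamma (n m : ℕ) : Set (Fin m → ℕ) := {c | IsTup n m c}

def GammaF (n m : ℕ) (b : Fin m → ℕ) : Set (Fin m → ℕ) :=
  {c | IsTup n m c ∧ b ≤ c}

/-- `prev c i` is `c (i-1)`, with the convention `c 0 = 0` (1-based indexing). -/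
def prev {m : ℕ} (c : Fin m → ℕ) (i : Fin m) : ℕ :=
  if _ : i.1 = 0 then 0 else c ⟨i.1 - 1, Nat.lt_of_le_of_lt (Nat.sub_le _ _) i.2⟩

/-- the condition `c i > b i` and `c i > c (i-1) + 1`. -/
def Good {m : ℕ} (b c : Fin m → ℕ) (i : Fin m) : Prop :=
  b i < c i ∧ prev c i + 1 < c i

/-- `c` is join-irreducible in `Γ(X;γ)`: it covers exactly one element. -/
def JoinIrr (n m : ℕ) (b : Fin m → ℕ) (c : ↥(GammaF n m b)) : Prop :=
  ∃! y : ↥(GammaF n m b), y ⋖ c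

/-- the poset of join-irreducible elements of `Γ(X;γ)`. -/
def JP (n m : ℕ) (b : Fin m → ℕ) : Set ↥(GammaF n m b) := {c | JoinIrr n m b c}

/-- the map φ, computed at index `i` (0-based; 1-based index is `i+1`). -/
def phi (n m : ℕ) (c : Fin m → ℕ) (i : Fin m) : ℕ × ℕ :=
  (n - c i - (m - 1 - i.1), i.1)

lemma smono_add {m : ℕ} {f : Fin m → ℕ} (hf : StrictMono f) :
    ∀ (d : ℕ) (j k : Fin m), k.1 = j.1 + d → f j + d ≤ f k := by
  intro d
  induction d with
  | zero =>
    intro j k h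
    have : j = k := Fin.ext (by omega)
    subst this; omega
  | succ d ih =>
    intro j k h
    have hjd : j.1 + d < m := by have := k.2; omega
    have h1 := ih j ⟨j.1 + d, hjd⟩ rfl
    have h2 : f ⟨j.1 + d, hjd⟩ < f k := hf (by simp only [Fin.lt_def]; omega)
    omega

lemma smono_le {m : ℕ} {f : Fin m → ℕ} (hf : StrictMono f) {j k : Fin m}
    (h : j.1 ≤ k.1) : f j + (k.1 - j.1) ≤ f k :=
  smono_add hf (k.1 - j.1) j k (by omega)

lemma construct (n m : ℕ) (b : Fin m → ℕ) (hb : b ∈ Gamma n m) (t : Fin m) (v : ℕ)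
    (hv1 : b t < v) (hv2 : v + (m - 1 - t.1) ≤ n) :
    ∃ c' : ↥(GammaF n m b), JoinIrr n m b c' ∧ Good b (c' : Fin m → ℕ) t ∧
      (c' : Fin m → ℕ) t = v := by
  obtain ⟨hbmono, hbb⟩ := hb
  obtain ⟨w, hw⟩ : ∃ w, v = w + 1 := ⟨v - 1, by omega⟩
  subst hw
  set f : Fin m → ℕ := fun j => if t.1 ≤ j.1 then max (b j) (w + 1 + (j.1 - t.1)) else b j with hfdef
  have hfge : ∀ j, t.1 ≤ j.1 → f j = max (b j) (w + 1 + (j.1 - t.1)) := by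
    intro j hj; simp only [hfdef, if_pos hj]
  have hflt : ∀ j : Fin m, j.1 < t.1 → f j = b j := by
    intro j hj; simp only [hfdef, if_neg (by omega : ¬ t.1 ≤ j.1)]
  have hft : f t = w + 1 := by
    rw [hfge t le_rfl]; omega
  have hfb : ∀ j, b j ≤ f j := by
    intro j
    by_cases hj : t.1 ≤ j.1
    · rw [hfge j hj]; exact le_max_left _ _
    · rw [hflt j (by omega)]
  have hfmono : StrictMono f := by
    intro j k hjk
    have hjk' : j.1 < k.1 := hjk
    by_cases hj : t.1 ≤ j.1
    · have hk : t.1 ≤ k.1 := by omega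
      rw [hfge j hj, hfge k hk]
      apply max_lt
      · exact lt_of_lt_of_le (hbmono hjk) (le_max_left _ _)
      · exact lt_of_lt_of_le (by omega) (le_max_right _ _)
    · by_cases hk : t.1 ≤ k.1
      · rw [hflt j (by omega), hfge k hk]
        exact lt_of_lt_of_le (hbmono hjk) (le_max_left _ _)
      · rw [hflt j (by omega), hflt k (by omega)]; exact hbmono hjk
  have hfub : ∀ j, f j ≤ n := by
    intro j
    by_cases hj : t.1 ≤ j.1
    · rw [hfge j hj]
      apply max_le ((hbb j).2)
      have := j.2; omega
    · rw [hflt j (by omega)]; exact (hbb j).2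
  have hfmem : f ∈ GammaF n m b :=
    ⟨⟨hfmono, fun j => ⟨le_trans (hbb j).1 (hfb j), hfub j⟩⟩, hfb⟩
  have hv2' : 1 ≤ w := by have := (hbb t).1; omega
  set g : Fin m → ℕ := fun j => if j = t then w else f j with hgdef
  have hgt : g t = w := by simp [hgdef]
  have hgne : ∀ j, j ≠ t → g j = f j := by intro j hj; simp [hgdef, hj]
  have hgf : ∀ j, g j ≤ f j := by
    intro j
    by_cases hj : j = t
    · subst hj; rw [hgt, hft]; omega
    · rw [hgne j hj]
  have hbg : ∀ j, b j ≤ g j := by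
    intro j
    by_cases hj : j = t
    · subst hj; rw [hgt]; omega
    · rw [hgne j hj]; exact hfb j
  have hgmono : StrictMono g := by
    intro j k hjk
    have hjk' : j.1 < k.1 := hjk
    by_cases hj : j = t
    · have hkt : k ≠ t := by intro h; rw [hj, h] at hjk'; omega
      have htk : t.1 < k.1 := by rw [hj] at hjk'; exact hjk'
      rw [hj, hgt, hgne k hkt, hfge k (by omega)]
      have h1 : w + 1 + 1 ≤ w + 1 + (k.1 - t.1) := by omega
      have h2 := le_max_right (b k) (w + 1 + (k.1 - t.1))
      omega
    · by_cases hk : k = t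
      · have hjt : j.1 < t.1 := by rw [hk] at hjk'; exact hjk'
        rw [hgne j hj, hk, hgt, hflt j hjt]
        have := smono_le hbmono (le_of_lt hjt : j.1 ≤ t.1)
        omega
      · rw [hgne j hj, hgne k hk]; exact hfmono hjk
  have hgmem : g ∈ GammaF n m b :=
    ⟨⟨hgmono, fun j => ⟨le_trans (hbb j).1 (hbg j), le_trans (hgf j) (hfub j)⟩⟩, hbg⟩
  have hglt : g < f := by
    rw [Pi.lt_def]
    exact ⟨hgf, t, by rw [hgt, hft]; omega⟩
  -- key lemma
  have key : ∀ z : Fin m → ℕ, z ∈ GammaF n m b → z < f → z ≤ g := by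
    intro z hz hzf
    obtain ⟨⟨hzmono, _⟩, hbz⟩ := hz
    have hzt : z t < w + 1 := by
      by_contra hcon
      push_neg at hcon
      have hfz : f ≤ z := by
        intro j
        by_cases hj : t.1 ≤ j.1
        · rw [hfge j hj]
          have h1 := smono_le hzmono (hj : t.1 ≤ j.1)
          exact max_le (hbz j) (le_trans (Nat.add_le_add_right hcon _) h1)
        · rw [hflt j (by omega)]; exact hbz j
      exact absurd hfz (lt_iff_le_not_ge.mp hzf).2
    intro j
    by_cases hj : j = t
    · rw [hj, hgt]; exact Nat.lt_succ_iff.mp hzt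
    · rw [hgne j hj]; exact (lt_iff_le_not_ge.mp hzf).1 j
  refine ⟨⟨f, hfmem⟩, ⟨⟨g, hgmem⟩, ?_, ?_⟩, ⟨?_, ?_⟩, hft⟩
  · constructor
    · exact Subtype.mk_lt_mk.mpr hglt
    · intro z hz1 hz2
      have h1 : (z : Fin m → ℕ) ≤ g := key z z.2 (Subtype.mk_lt_mk.mp hz2)
      have h2 : g < (z : Fin m → ℕ) := Subtype.mk_lt_mk.mp hz1
      exact absurd (lt_of_lt_of_le h2 h1) (lt_irrefl _)
  · intro y hy
    have h1 : (y : Fin m → ℕ) ≤ g := key y y.2 (Subtype.coe_lt_coe.mpr hy.1)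
    have h2 : y ≤ (⟨g, hgmem⟩ : ↥(GammaF n m b)) := h1
    rcases eq_or_lt_of_le h2 with h | h
    · exact h
    · exact absurd (Subtype.mk_lt_mk.mpr hglt) (hy.2 h)
  · show b t < f t
    rw [hft]; exact hv1
  · show prev f t + 1 < f t
    rw [hft]
    unfold prev
    split
    · omega
    · next h =>
      rw [hflt _ (show t.1 - 1 < t.1 by omega)]
      have hlt : (⟨t.1 - 1, Nat.lt_of_le_of_lt (Nat.sub_le _ _) t.2⟩ : Fin m) < t := by
        simp only [Fin.lt_def]; omega
      have := hbmono hlt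
      omega

lemma arith1 (n m i q' p p' bq bi ci : ℕ) (him : i < m) (hqi : q' ≤ i)
    (hlast : ci + (m - 1 - i) ≤ n) (hpq1 : n - ci - (m - 1 - i) = p)
    (hbii : bq + (i - q') ≤ bi) (hgood : bi < ci) (hp : p' ≤ p) (hb1 : 1 ≤ bq) :
    bq < n - p' - (m - 1 - q') ∧ (n - p' - (m - 1 - q')) + (m - 1 - q') ≤ n ∧
      n - (n - p' - (m - 1 - q')) - (m - 1 - q') = p' := by omega

theorem stmt13 (n m : ℕ) (hm : 1 ≤ m) (hmn : m ≤ n) (b : Fin m → ℕ)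
    (hb : b ∈ Gamma n m) (c : ↥(GammaF n m b)) (hc : JoinIrr n m b c)
    (i : Fin m) (hi : Good b (c : Fin m → ℕ) i)
    (p q p' q' : ℕ) (hpq : phi n m (c : Fin m → ℕ) i = (p, q))
    (hp : p' ≤ p) (hq : q' ≤ q) :
    ∃ c' : ↥(GammaF n m b), ∃ i' : Fin m, JoinIrr n m b c' ∧
      Good b (c' : Fin m → ℕ) i' ∧ phi n m (c' : Fin m → ℕ) i' = (p', q') := by
  obtain ⟨⟨hcmono, hcbd⟩, hbc⟩ := c.2
  obtain ⟨hbmono, hbb⟩ := hb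
  have hpq1 : n - (c : Fin m → ℕ) i - (m - 1 - i.1) = p := congrArg Prod.fst hpq
  have hpq2 : i.1 = q := congrArg Prod.snd hpq
  have hqi : q' ≤ i.1 := by omega
  set i' : Fin m := ⟨q', lt_of_le_of_lt hqi i.2⟩ with hi'def
  have hlast : (c : Fin m → ℕ) i + ((m - 1) - i.1) ≤ n := by
    have hmlt : m - 1 < m := by omega
    have h1 : (c : Fin m → ℕ) i + ((m - 1) - i.1) ≤ (c : Fin m → ℕ) ⟨m - 1, hmlt⟩ :=
      smono_le hcmono (j := i) (k := ⟨m - 1, hmlt⟩) (show i.1 ≤ m - 1 by omega)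
    have h2 := (hcbd ⟨m - 1, hmlt⟩).2
    omega
  have hbii : b i' + (i.1 - q') ≤ b i := smono_le hbmono (by exact hqi)
  have hgood := hi.1
  have hb1 := (hbb i').1
  obtain ⟨hv1, hv2, hv3⟩ := arith1 n m i.1 q' p p' (b i') (b i) ((c : Fin m → ℕ) i)
    i.2 hqi hlast hpq1 hbii hgood hp hb1
  obtain ⟨c', hji, hg', hct⟩ := construct n m b ⟨hbmono, hbb⟩ i'
    (n - p' - (m - 1 - q')) hv1 (by simpa [hi'def] using hv2)
  refine ⟨c', i', hji, hg', ?_⟩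
  unfold phi
  rw [hct]
  simp only [hi'def]
  rw [hv3]
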